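/- Let U be n×p with U^T U = I_p, and suppose the rows of U indexed by I_p = {i₁ < … < i_p} form an invertible p×p submatrix U_p. If scalars α_i for i ∉ I_p satisfy Σ_{i∉I_p} α_i (I_n - U U^T)(e_i f_c^T) = 0 for some fixed c, then α_i = 0 for all i ∉ I_p. (Linear independence of the tangent vectors Δ''_{ic}.) -/

import Mathlib

open Matrix

theorem stiefel_frame_second_linear_independent {n p : ℕ}
    (U : Matrix (Fin n) (Fin p) ℝ) (hU : Uᵀ * U = 1)
    (g : Fin p → Fin n) (hg : StrictMono g)
    (hUp : IsUnit (U.submatrix g id)) (c : Fin p)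
    (α : Fin n → ℝ)
    (hsum : ∑ i ∈ Finset.univ.filter (fun i => i ∉ Finset.image g Finset.univ),
        α i • ((1 - U * Uᵀ) * Matrix.single i c (1 : ℝ)) = 0) :
    ∀ i, i ∉ Finset.image g Finset.univ → α i = 0 := by
  classical
  set v : Fin n → ℝ := fun j => if j ∈ Finset.image g Finset.univ then 0 else α j with hv
  -- Step 1: (1 - U Uᵀ) *ᵥ v = 0
  have hstep1 : (1 - U * Uᵀ) *ᵥ v = 0 := by
    funext j
    have h := congrFun (congrFun hsum j) c
    simp only [Matrix.sum_apply, Matrix.smul_apply, Matrix.zero_apply, smul_eq_mul] at h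
    have hkey : ∀ i : Fin n,
        (((1 - U * Uᵀ) * Matrix.single i c (1 : ℝ) : Matrix (Fin n) (Fin p) ℝ)) j c
          = ((1 - U * Uᵀ : Matrix (Fin n) (Fin n) ℝ)) j i := by
      intro i
      rw [Matrix.mul_apply]
      rw [Finset.sum_eq_single i]
      · simp [Matrix.single]
      · intro b _ hb; simp [Matrix.single, Ne.symm hb]
      · simp
    simp only [hkey] at h
    show ((1 - U * Uᵀ) *ᵥ v) j = 0
    rw [Matrix.mulVec]
    show (fun i => ((1 - U * Uᵀ : Matrix (Fin n) (Fin n) ℝ)) j i) ⬝ᵥ v = 0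
    rw [dotProduct]
    rw [← Finset.sum_filter_add_sum_filter_not Finset.univ
      (fun i : Fin n => i ∉ Finset.image g Finset.univ)]
    have h2 : ∑ i ∈ Finset.univ.filter (fun i : Fin n => ¬ i ∉ Finset.image g Finset.univ),
        ((1 - U * Uᵀ : Matrix (Fin n) (Fin n) ℝ)) j i * v i = 0 := by
      apply Finset.sum_eq_zero
      intro i hi
      simp only [Finset.mem_filter, not_not] at hi
      have : v i = 0 := if_pos hi.2
      rw [this, mul_zero]
    rw [h2, add_zero, ← h]
    apply Finset.sum_congr rfl
    intro i hi
    simp only [Finset.mem_filter] at hi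
    have hvi : v i = α i := if_neg hi.2
    rw [hvi, mul_comm]
  -- Step 2: v = U *ᵥ (Uᵀ *ᵥ v)
  have hvU : v = U *ᵥ (Uᵀ *ᵥ v) := by
    have h3 : (1 : Matrix (Fin n) (Fin n) ℝ) *ᵥ v - (U * Uᵀ) *ᵥ v = 0 := by
      rw [← Matrix.sub_mulVec]; exact hstep1
    rw [Matrix.one_mulVec, sub_eq_zero] at h3
    rw [Matrix.mulVec_mulVec]
    exact h3
  -- Step 3: submatrix mulVec (Uᵀ *ᵥ v) = 0
  have hsub : (U.submatrix g id) *ᵥ (Uᵀ *ᵥ v) = 0 := by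
    funext k
    have hgk : g k ∈ Finset.image g Finset.univ := Finset.mem_image_of_mem g (Finset.mem_univ k)
    have hvgk : v (g k) = 0 := if_pos hgk
    have : (U.submatrix g id *ᵥ (Uᵀ *ᵥ v)) k = (U *ᵥ (Uᵀ *ᵥ v)) (g k) := by
      simp [Matrix.mulVec, dotProduct, Matrix.submatrix_apply]
    rw [this, ← hvU, hvgk]
    rfl
  -- Step 4: Uᵀ *ᵥ v = 0
  have hdet : IsUnit (U.submatrix g id).det := (Matrix.isUnit_iff_isUnit_det _).mp hUp
  have hw0 : Uᵀ *ᵥ v = 0 := by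
    have h1 : (U.submatrix g id)⁻¹ * (U.submatrix g id) = 1 := Matrix.nonsing_inv_mul _ hdet
    calc Uᵀ *ᵥ v = ((U.submatrix g id)⁻¹ * (U.submatrix g id)) *ᵥ (Uᵀ *ᵥ v) := by
          rw [h1, Matrix.one_mulVec]
      _ = (U.submatrix g id)⁻¹ *ᵥ ((U.submatrix g id) *ᵥ (Uᵀ *ᵥ v)) := by
          rw [← Matrix.mulVec_mulVec]
      _ = 0 := by rw [hsub, Matrix.mulVec_zero]
  have hv0 : v = 0 := by rw [hvU, hw0, Matrix.mulVec_zero]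
  intro i hi
  have h4 := congrFun hv0 i
  rw [show v i = α i from if_neg hi] at h4
  exact h4
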